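/- In the discrete auto rate-tuning model, if the effective learning rate ratio exceeds 1 at time step i, i.e. R(i) > 1, then it strictly decreases in the next step: R(i+1) < R(i). -/

import Mathlib

/-- Discrete auto rate-tuning model: if the ELR ratio exceeds 1, it strictly
decreases in the next step. -/
theorem elr_ratio_gt_one_decreases
    (cl ck : ℝ) (hcl : 0 < cl) (hck : 0 < ck)
    (lam : ℕ → ℝ) (hlam : ∀ i, 0 < lam i)
    (sl sk : ℕ → ℝ) (hsl0 : 0 < sl 0) (hsk0 : 0 < sk 0)
    (hsl : ∀ i, sl (i + 1) = sl i + (lam i) ^ 2 * cl ^ 2 / sl i)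
    (hsk : ∀ i, sk (i + 1) = sk i + (lam i) ^ 2 * ck ^ 2 / sk i)
    (R : ℕ → ℝ) (hR : ∀ i, R i = cl * sk i / (ck * sl i))
    (i : ℕ) (hRi : 1 < R i) :
    R (i + 1) < R i := by
  have hslpos : ∀ n, 0 < sl n := by
    intro n
    induction n with
    | zero => exact hsl0
    | succ n ih => rw [hsl n]; positivity
  have hskpos : ∀ n, 0 < sk n := by
    intro n
    induction n with
    | zero => exact hsk0
    | succ n ih => rw [hsk n]; positivity
  have hli := hslpos i
  have hki := hskpos i
  have hl := hlam i
  have key : ck * sl i < cl * sk i := by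
    rw [hR i] at hRi
    have hd : 0 < ck * sl i := by positivity
    calc ck * sl i = 1 * (ck * sl i) := by ring
    _ < (cl * sk i / (ck * sl i)) * (ck * sl i) := mul_lt_mul_of_pos_right hRi hd
    _ = cl * sk i := by field_simp
  have keysq : (ck * sl i) * (ck * sl i) < (cl * sk i) * (cl * sk i) :=
    mul_self_lt_mul_self (by positivity) key
  rw [hR (i+1), hR i, hsl i, hsk i]
  rw [div_lt_div_iff₀ (by positivity) (by positivity)]
  apply (mul_lt_mul_iff_left₀ (mul_pos hki hli)).mp
  have e1 : cl * (sk i + lam i ^ 2 * ck ^ 2 / sk i) * (ck * sl i) * (sk i * sl i)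
      = cl * ck * (sk i ^ 2 * sl i ^ 2 + lam i ^ 2 * ck ^ 2 * sl i ^ 2) := by
    field_simp
  have e2 : cl * sk i * (ck * (sl i + lam i ^ 2 * cl ^ 2 / sl i)) * (sk i * sl i)
      = cl * ck * (sk i ^ 2 * sl i ^ 2 + lam i ^ 2 * cl ^ 2 * sk i ^ 2) := by
    field_simp
  rw [e1, e2]
  nlinarith [mul_lt_mul_of_pos_left keysq (by positivity : (0:ℝ) < cl * ck * lam i ^ 2)]
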